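/- Let A be an m×n dual complex matrix and let X be an NDMPI of A, and set A_e = A·X·A (the essential part of A). Then A*·A = (A_e)*·A = A*·A_e, and A·A* = A_e·A* = A·(A_e)*. -/

import Mathlib

open Matrix

/-- The dual complex numbers ℂ[ε] with ε² = 0 (dual numbers over ℂ). -/
abbrev DualComplex := DualNumber ℂ

/-- Conjugation on dual complex numbers: star (a + b·ε) = (conj a) + (conj b)·ε. -/
noncomputable instance : StarRing DualComplex where
  star x := ⟨star x.fst, star x.snd⟩
  star_involutive x := TrivSqZeroExt.ext (star_star x.fst) (star_star x.snd)
  star_mul x y := TrivSqZeroExt.ext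
    (by simp [TrivSqZeroExt.fst_mul, mul_comm]; erw [TrivSqZeroExt.fst_mul]; exact mul_comm _ _)
    (by simp [TrivSqZeroExt.snd_mul]; erw [TrivSqZeroExt.snd_mul]; simp; ring)
  star_add x y := TrivSqZeroExt.ext (by simp; rfl) (by simp; rfl)

/-- `X` is a new dual Moore–Penrose inverse (NDMPI) of `M`:
`M*·M·X·M·M* = M*·M·M*`, `X·M·X = X`, `(M·X)* = M·X`, `(X·M)* = X·M`. -/
def IsNDMPI {m n : ℕ} (M : Matrix (Fin m) (Fin n) DualComplex)
    (X : Matrix (Fin n) (Fin m) DualComplex) : Prop :=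
  Mᴴ * M * X * M * Mᴴ = Mᴴ * M * Mᴴ ∧
  X * M * X = X ∧
  (M * X)ᴴ = M * X ∧
  (X * M)ᴴ = X * M

namespace DCAux
variable {m n p : ℕ}

def fstM {I J : Type*} (M : Matrix I J DualComplex) : Matrix I J ℂ := M.map TrivSqZeroExt.fst
def sndM {I J : Type*} (M : Matrix I J DualComplex) : Matrix I J ℂ := M.map TrivSqZeroExt.snd

lemma ext_of {I J : Type*} {M N : Matrix I J DualComplex} (h1 : fstM M = fstM N)
    (h2 : sndM M = sndM N) : M = N :=
  Matrix.ext fun i j => TrivSqZeroExt.ext (congrFun (congrFun h1 i) j) (congrFun (congrFun h2 i) j)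

lemma fstM_mul (M : Matrix (Fin m) (Fin n) DualComplex) (N : Matrix (Fin n) (Fin p) DualComplex) :
    fstM (M * N) = fstM M * fstM N := by
  ext i j
  simp [fstM, Matrix.mul_apply, TrivSqZeroExt.fst_sum]

lemma sndM_mul (M : Matrix (Fin m) (Fin n) DualComplex) (N : Matrix (Fin n) (Fin p) DualComplex) :
    sndM (M * N) = fstM M * sndM N + sndM M * fstM N := by
  ext i j
  simp [fstM, sndM, Matrix.mul_apply, TrivSqZeroExt.snd_sum, TrivSqZeroExt.snd_mul,
    Finset.sum_add_distrib, mul_comm]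

lemma fstM_conjTranspose (M : Matrix (Fin m) (Fin n) DualComplex) :
    fstM Mᴴ = (fstM M)ᴴ := rfl

lemma sndM_conjTranspose (M : Matrix (Fin m) (Fin n) DualComplex) :
    sndM Mᴴ = (sndM M)ᴴ := rfl

lemma fstM_sub {I J : Type*} (M N : Matrix I J DualComplex) :
    fstM (M - N) = fstM M - fstM N := by ext i j; simp [fstM]

lemma sndM_sub {I J : Type*} (M N : Matrix I J DualComplex) :
    sndM (M - N) = sndM M - sndM N := by ext i j; simp [sndM]

lemma fstM_zero {I J : Type*} : fstM (0 : Matrix I J DualComplex) = 0 := by ext i j; simp [fstM]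
lemma sndM_zero {I J : Type*} : sndM (0 : Matrix I J DualComplex) = 0 := by ext i j; simp [sndM]

end DCAux

namespace DCAux
open scoped ComplexOrder in
theorem main {m n : ℕ} (A : Matrix (Fin m) (Fin n) DualComplex)
    (X : Matrix (Fin n) (Fin m) DualComplex) (hX : IsNDMPI A X) :
    (Aᴴ * A = (A * X * A)ᴴ * A ∧ Aᴴ * A = Aᴴ * (A * X * A)) ∧
    (A * Aᴴ = (A * X * A) * Aᴴ ∧ A * Aᴴ = A * (A * X * A)ᴴ) := by
  obtain ⟨h1, h2, h3, h4⟩ := hX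
  -- dual-level facts about E := A * X * A - A
  have hA : (Aᴴ * (A * X * A - A)) * Aᴴ = 0 := by
    simp only [Matrix.mul_sub, Matrix.sub_mul, ← Matrix.mul_assoc, h1, sub_self]
  have hE3 : (A * X * A)ᴴ = Aᴴ * (A * X) := by rw [conjTranspose_mul, h3]
  have hherm : (Aᴴ * (A * X * A - A))ᴴ = Aᴴ * (A * X * A - A) := by
    rw [conjTranspose_mul, conjTranspose_sub, hE3, conjTranspose_conjTranspose]
    simp only [Matrix.sub_mul, Matrix.mul_sub, Matrix.mul_assoc]
  have hsq : (Aᴴ * (A * X * A - A)) * (Aᴴ * (A * X * A - A)) = 0 := by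
    rw [← Matrix.mul_assoc, hA, Matrix.zero_mul]
  -- standard components
  have hD0A : fstM (Aᴴ * (A * X * A - A)) * (fstM A)ᴴ = 0 := by
    have := congrArg fstM hA
    rwa [fstM_mul, fstM_conjTranspose, fstM_zero] at this
  have hD0sq : fstM (Aᴴ * (A * X * A - A)) * fstM (Aᴴ * (A * X * A - A)) = 0 := by
    have := congrArg fstM hsq
    rwa [fstM_mul, fstM_zero] at this
  have hD0herm : (fstM (Aᴴ * (A * X * A - A)))ᴴ = fstM (Aᴴ * (A * X * A - A)) := by
    have := congrArg fstM hherm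
    rwa [fstM_conjTranspose] at this
  have hD0zero : fstM (Aᴴ * (A * X * A - A)) = 0 := by
    rw [← Matrix.self_mul_conjTranspose_eq_zero (A := fstM (Aᴴ * (A * X * A - A))), hD0herm, hD0sq]
  -- E0 = 0
  have hE0fact : fstM (A * X * A - A) = fstM A * (fstM X * fstM A - 1) := by
    rw [fstM_sub, fstM_mul, fstM_mul, Matrix.mul_sub, Matrix.mul_one, Matrix.mul_assoc]
  have hE0zero : fstM (A * X * A - A) = 0 := by
    have h5 : ((fstM A)ᴴ * fstM A) * (fstM X * fstM A - 1) = 0 := by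
      rw [Matrix.mul_assoc, ← hE0fact, ← fstM_conjTranspose, ← fstM_mul, hD0zero]
    rw [Matrix.conjTranspose_mul_self_mul_eq_zero] at h5
    rw [hE0fact, h5]
  -- D1 facts
  have hD1eq : sndM (Aᴴ * (A * X * A - A)) = (fstM A)ᴴ * sndM (A * X * A - A) := by
    rw [sndM_mul, fstM_conjTranspose, sndM_conjTranspose, hE0zero, Matrix.mul_zero, add_zero]
  have hD1A : sndM (Aᴴ * (A * X * A - A)) * (fstM A)ᴴ = 0 := by
    have := congrArg sndM hA
    rwa [sndM_mul, fstM_conjTranspose, sndM_conjTranspose, sndM_zero, hD0zero, Matrix.zero_mul,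
      zero_add] at this
  have hD1herm : (sndM (Aᴴ * (A * X * A - A)))ᴴ = sndM (Aᴴ * (A * X * A - A)) := by
    have := congrArg sndM hherm
    rwa [sndM_conjTranspose] at this
  have hD1zero : sndM (Aᴴ * (A * X * A - A)) = 0 := by
    have key : sndM (Aᴴ * (A * X * A - A)) * sndM (Aᴴ * (A * X * A - A)) =
        (sndM (Aᴴ * (A * X * A - A)) * (fstM A)ᴴ) * sndM (A * X * A - A) := by
      rw [hD1eq]; simp only [Matrix.mul_assoc]
    rw [← Matrix.self_mul_conjTranspose_eq_zero (A := sndM (Aᴴ * (A * X * A - A))), hD1herm, key,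
      hD1A, Matrix.zero_mul]
  -- D = 0, left identities
  have hD : Aᴴ * (A * X * A - A) = 0 :=
    ext_of (by rw [hD0zero, fstM_zero]) (by rw [hD1zero, sndM_zero])
  have hDfin : Aᴴ * (A * X * A) = Aᴴ * A := by
    rw [Matrix.mul_sub, sub_eq_zero] at hD
    exact hD
  -- G side
  have hE4 : (A * X * A)ᴴ = X * A * Aᴴ := by
    rw [Matrix.mul_assoc, conjTranspose_mul, h4]
  have hGherm : ((A * X * A - A) * Aᴴ)ᴴ = (A * X * A - A) * Aᴴ := by
    rw [conjTranspose_mul, conjTranspose_sub, hE4, conjTranspose_conjTranspose]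
    simp only [Matrix.sub_mul, Matrix.mul_sub, Matrix.mul_assoc]
  have hG1eq : sndM ((A * X * A - A) * Aᴴ) = sndM (A * X * A - A) * (fstM A)ᴴ := by
    rw [sndM_mul, fstM_conjTranspose, sndM_conjTranspose, hE0zero, Matrix.zero_mul, zero_add]
  have hG0zero : fstM ((A * X * A - A) * Aᴴ) = 0 := by
    rw [fstM_mul, hE0zero, Matrix.zero_mul]
  have hG1zero : sndM ((A * X * A - A) * Aᴴ) = 0 := by
    have hAE1 : (fstM A)ᴴ * sndM (A * X * A - A) = 0 := by rw [← hD1eq, hD1zero]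
    have hGsh : (sndM ((A * X * A - A) * Aᴴ))ᴴ = sndM ((A * X * A - A) * Aᴴ) := by
      have := congrArg sndM hGherm
      rwa [sndM_conjTranspose] at this
    have key2 : sndM ((A * X * A - A) * Aᴴ) * sndM ((A * X * A - A) * Aᴴ) =
        sndM (A * X * A - A) * (((fstM A)ᴴ * sndM (A * X * A - A)) * (fstM A)ᴴ) := by
      rw [hG1eq]; simp only [Matrix.mul_assoc]
    rw [← Matrix.self_mul_conjTranspose_eq_zero (A := sndM ((A * X * A - A) * Aᴴ)), hGsh, key2,
      hAE1, Matrix.zero_mul, Matrix.mul_zero]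
  have hG : (A * X * A - A) * Aᴴ = 0 :=
    ext_of (by rw [hG0zero, fstM_zero]) (by rw [hG1zero, sndM_zero])
  have hGfin : (A * X * A) * Aᴴ = A * Aᴴ := by
    rw [Matrix.sub_mul, sub_eq_zero] at hG
    exact hG
  refine ⟨⟨?_, hDfin.symm⟩, ⟨hGfin.symm, ?_⟩⟩
  · rw [conjTranspose_mul, h3, Matrix.mul_assoc, hDfin]
  · rw [hE4, ← Matrix.mul_assoc, ← Matrix.mul_assoc, hGfin]

end DCAux

/-- If `X` is an NDMPI of `A` and `A_e = A·X·A`, then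
`A*·A = (A_e)*·A = A*·A_e` and `A·A* = A_e·A* = A·(A_e)*`. -/
theorem stmt_0 {m n : ℕ} (A : Matrix (Fin m) (Fin n) DualComplex)
    (X : Matrix (Fin n) (Fin m) DualComplex) (hX : IsNDMPI A X) :
    (Aᴴ * A = (A * X * A)ᴴ * A ∧ Aᴴ * A = Aᴴ * (A * X * A)) ∧
    (A * Aᴴ = (A * X * A) * Aᴴ ∧ A * Aᴴ = A * (A * X * A)ᴴ) :=
  DCAux.main A X hX
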